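/- Let A and B be finite-dimensional k-algebras, M an A-B-bimodule and N a B-A-bimodule such that the regular A-A-bimodule A is isomorphic to a direct summand of M ⊗_B N. Then every simple left A-module is a homomorphic image of the left A-module M, and every simple right A-module is a homomorphic image of the right A-module N. -/

import Mathlib

open scoped TensorProduct
open MulOpposite

universe u

namespace JJ

noncomputable section

section BalTensor

variable (B : Type u) [Ring B] (M : Type u) [AddCommGroup M] [Module Bᵐᵒᵖ M]
  (N : Type u) [AddCommGroup N] [Module B N]

/-- The subgroup of relations defining the balanced tensor product `M ⊗_B N`. -/
def balRel : Submodule ℤ (TensorProduct ℤ M N) :=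
  Submodule.span ℤ { z | ∃ (b : B) (m : M) (n : N),
    z = (op b • m) ⊗ₜ[ℤ] n - m ⊗ₜ[ℤ] (b • n) }

/-- The balanced tensor product `M ⊗_B N` of a right `B`-module `M` and a left `B`-module `N`. -/
def BalTensor : Type u := TensorProduct ℤ M N ⧸ balRel B M N

instance : AddCommGroup (BalTensor B M N) :=
  inferInstanceAs (AddCommGroup (TensorProduct ℤ M N ⧸ balRel B M N))

/-- The canonical projection onto the balanced tensor product. -/
def BalTensor.mk : TensorProduct ℤ M N →+ BalTensor B M N :=
  (balRel B M N).mkQ.toAddMonoidHom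

/-- The image of a pure tensor in the balanced tensor product. -/
def BalTensor.tmul (m : M) (n : N) : BalTensor B M N := BalTensor.mk B M N (m ⊗ₜ n)

lemma BalTensor.mk_surjective : Function.Surjective (BalTensor.mk B M N) :=
  Submodule.mkQ_surjective _

lemma BalTensor.balance (b : B) (m : M) (n : N) :
    BalTensor.tmul B M N (op b • m) n = BalTensor.tmul B M N m (b • n) := by
  have h : ((op b • m) ⊗ₜ[ℤ] n - m ⊗ₜ[ℤ] (b • n)) ∈ balRel B M N :=
    Submodule.subset_span ⟨b, m, n, rfl⟩
  have h2 := (Submodule.Quotient.mk_eq_zero (balRel B M N)).2 h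
  rw [Submodule.Quotient.mk_sub] at h2
  exact sub_eq_zero.1 h2

end BalTensor

section LeftAction

variable (B : Type u) [Ring B] (M : Type u) [AddCommGroup M] [Module Bᵐᵒᵖ M]
  (N : Type u) [AddCommGroup N] [Module B N]
  (A : Type u) [Ring A] [Module A M] [SMulCommClass A Bᵐᵒᵖ M]

/-- The left action of `a : A` on the plain tensor product. -/
def lActAux (a : A) : TensorProduct ℤ M N →ₗ[ℤ] TensorProduct ℤ M N :=
  LinearMap.rTensor N (DistribMulAction.toAddMonoidHom M a).toIntLinearMap

lemma lActAux_tmul (a : A) (m : M) (n : N) :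
    lActAux M N A a (m ⊗ₜ n) = (a • m) ⊗ₜ n := by
  rfl

lemma lActAux_rel (a : A) :
    balRel B M N ≤ (balRel B M N).comap (lActAux M N A a) := by
  rw [balRel, Submodule.span_le]
  rintro z ⟨b, m, n, rfl⟩
  simp only [SetLike.mem_coe, Submodule.mem_comap, map_sub, lActAux_tmul]
  rw [smul_comm a (op b) m]
  exact Submodule.subset_span ⟨b, a • m, n, rfl⟩

/-- The left action of `A` on the balanced tensor product. -/
def lAct (a : A) : BalTensor B M N →ₗ[ℤ] BalTensor B M N :=
  Submodule.mapQ _ _ (lActAux M N A a) (lActAux_rel B M N A a)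

instance : SMul A (BalTensor B M N) := ⟨fun a x => lAct B M N A a x⟩

lemma BalTensor.lsmul_mk (a : A) (x : TensorProduct ℤ M N) :
    a • (BalTensor.mk B M N x) = BalTensor.mk B M N (lActAux M N A a x) := rfl

lemma BalTensor.lsmul_tmul (a : A) (m : M) (n : N) :
    a • (BalTensor.tmul B M N m n) = BalTensor.tmul B M N (a • m) n := by
  rw [BalTensor.tmul, BalTensor.lsmul_mk, lActAux_tmul]
  rfl

instance BalTensor.instLeftModule : Module A (BalTensor B M N) where
  one_smul x := by
    obtain ⟨y, rfl⟩ := BalTensor.mk_surjective B M N x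
    rw [BalTensor.lsmul_mk]
    congr 1
    have h : lActAux M N A (1 : A) = LinearMap.id :=
      LinearMap.ext fun y => y.induction_on (by simp) (fun m n => by rw [lActAux_tmul, one_smul]; rfl) (fun x y hx hy => by simp only [map_add, hx, hy])
    rw [h]; rfl
  mul_smul a b x := by
    obtain ⟨y, rfl⟩ := BalTensor.mk_surjective B M N x
    rw [BalTensor.lsmul_mk, BalTensor.lsmul_mk, BalTensor.lsmul_mk]
    congr 1
    have h : lActAux M N A (a * b) = (lActAux M N A a).comp (lActAux M N A b) :=
      LinearMap.ext fun y => y.induction_on (by simp) (fun m n => by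
        simp only [LinearMap.comp_apply, lActAux_tmul, mul_smul]) (fun x y hx hy => by simp only [map_add, hx, hy])
    rw [h]; rfl
  smul_zero a := map_zero (lAct B M N A a)
  smul_add a x y := map_add (lAct B M N A a) x y
  add_smul a b x := by
    obtain ⟨y, rfl⟩ := BalTensor.mk_surjective B M N x
    rw [BalTensor.lsmul_mk, BalTensor.lsmul_mk, BalTensor.lsmul_mk, ← map_add]
    congr 1
    have h : lActAux M N A (a + b) = lActAux M N A a + lActAux M N A b :=
      LinearMap.ext fun y => y.induction_on (by simp) (fun m n => by
        simp only [LinearMap.add_apply, lActAux_tmul, add_smul, TensorProduct.add_tmul]) (fun x y hx hy => by simp only [map_add, hx, hy])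
    rw [h]; rfl
  zero_smul x := by
    obtain ⟨y, rfl⟩ := BalTensor.mk_surjective B M N x
    rw [BalTensor.lsmul_mk]
    have h : lActAux M N A (0 : A) = 0 :=
      LinearMap.ext fun y => y.induction_on (by simp) (fun m n => by
        simp only [lActAux_tmul, zero_smul, TensorProduct.zero_tmul, LinearMap.zero_apply]) (fun x y hx hy => by simp only [map_add, hx, hy])
    rw [h]
    simp

end LeftAction

section RightAction

variable (B : Type u) [Ring B] (M : Type u) [AddCommGroup M] [Module Bᵐᵒᵖ M]
  (N : Type u) [AddCommGroup N] [Module B N]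
  (C : Type u) [Ring C] [Module Cᵐᵒᵖ N] [SMulCommClass B Cᵐᵒᵖ N]

/-- The right action of `c : Cᵐᵒᵖ` on the plain tensor product. -/
def rActAux (c : Cᵐᵒᵖ) : TensorProduct ℤ M N →ₗ[ℤ] TensorProduct ℤ M N :=
  LinearMap.lTensor M (DistribMulAction.toAddMonoidHom N c).toIntLinearMap

lemma rActAux_tmul (c : Cᵐᵒᵖ) (m : M) (n : N) :
    rActAux M N C c (m ⊗ₜ n) = m ⊗ₜ (c • n) := by
  rfl

lemma rActAux_rel (c : Cᵐᵒᵖ) :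
    balRel B M N ≤ (balRel B M N).comap (rActAux M N C c) := by
  rw [balRel, Submodule.span_le]
  rintro z ⟨b, m, n, rfl⟩
  simp only [SetLike.mem_coe, Submodule.mem_comap, map_sub, rActAux_tmul]
  rw [← smul_comm b c n]
  exact Submodule.subset_span ⟨b, m, c • n, rfl⟩

/-- The right action of `Cᵐᵒᵖ` on the balanced tensor product. -/
def rAct (c : Cᵐᵒᵖ) : BalTensor B M N →ₗ[ℤ] BalTensor B M N :=
  Submodule.mapQ _ _ (rActAux M N C c) (rActAux_rel B M N C c)

instance : SMul Cᵐᵒᵖ (BalTensor B M N) := ⟨fun c x => rAct B M N C c x⟩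

lemma BalTensor.rsmul_mk (c : Cᵐᵒᵖ) (x : TensorProduct ℤ M N) :
    c • (BalTensor.mk B M N x) = BalTensor.mk B M N (rActAux M N C c x) := rfl

lemma BalTensor.rsmul_tmul (c : Cᵐᵒᵖ) (m : M) (n : N) :
    c • (BalTensor.tmul B M N m n) = BalTensor.tmul B M N m (c • n) := by
  rw [BalTensor.tmul, BalTensor.rsmul_mk, rActAux_tmul]
  rfl

instance BalTensor.instRightModule : Module Cᵐᵒᵖ (BalTensor B M N) where
  one_smul x := by
    obtain ⟨y, rfl⟩ := BalTensor.mk_surjective B M N x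
    rw [BalTensor.rsmul_mk]
    congr 1
    have h : rActAux M N C (1 : Cᵐᵒᵖ) = LinearMap.id :=
      LinearMap.ext fun y => y.induction_on (by simp) (fun m n => by rw [rActAux_tmul, one_smul]; rfl) (fun x y hx hy => by simp only [map_add, hx, hy])
    rw [h]; rfl
  mul_smul a b x := by
    obtain ⟨y, rfl⟩ := BalTensor.mk_surjective B M N x
    rw [BalTensor.rsmul_mk, BalTensor.rsmul_mk, BalTensor.rsmul_mk]
    congr 1
    have h : rActAux M N C (a * b) = (rActAux M N C a).comp (rActAux M N C b) :=
      LinearMap.ext fun y => y.induction_on (by simp) (fun m n => by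
        simp only [LinearMap.comp_apply, rActAux_tmul, mul_smul]) (fun x y hx hy => by simp only [map_add, hx, hy])
    rw [h]; rfl
  smul_zero c := map_zero (rAct B M N C c)
  smul_add c x y := map_add (rAct B M N C c) x y
  add_smul a b x := by
    obtain ⟨y, rfl⟩ := BalTensor.mk_surjective B M N x
    rw [BalTensor.rsmul_mk, BalTensor.rsmul_mk, BalTensor.rsmul_mk, ← map_add]
    congr 1
    have h : rActAux M N C (a + b) = rActAux M N C a + rActAux M N C b :=
      LinearMap.ext fun y => y.induction_on (by simp) (fun m n => by
        simp only [LinearMap.add_apply, rActAux_tmul, add_smul, TensorProduct.tmul_add]) (fun x y hx hy => by simp only [map_add, hx, hy])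
    rw [h]; rfl
  zero_smul x := by
    obtain ⟨y, rfl⟩ := BalTensor.mk_surjective B M N x
    rw [BalTensor.rsmul_mk]
    have h : rActAux M N C (0 : Cᵐᵒᵖ) = 0 :=
      LinearMap.ext fun y => y.induction_on (by simp) (fun m n => by
        simp only [rActAux_tmul, zero_smul, TensorProduct.tmul_zero, LinearMap.zero_apply]) (fun x y hx hy => by simp only [map_add, hx, hy])
    rw [h]
    simp

end RightAction

section Comm

variable (B : Type u) [Ring B] (M : Type u) [AddCommGroup M] [Module Bᵐᵒᵖ M]
  (N : Type u) [AddCommGroup N] [Module B N]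
  (A : Type u) [Ring A] [Module A M] [SMulCommClass A Bᵐᵒᵖ M]
  (C : Type u) [Ring C] [Module Cᵐᵒᵖ N] [SMulCommClass B Cᵐᵒᵖ N]

instance BalTensor.instSMulCommClass : SMulCommClass A Cᵐᵒᵖ (BalTensor B M N) := by
  constructor
  intro a c x
  obtain ⟨y, rfl⟩ := BalTensor.mk_surjective B M N x
  rw [BalTensor.rsmul_mk, BalTensor.lsmul_mk, BalTensor.lsmul_mk, BalTensor.rsmul_mk]
  congr 1
  have h : (lActAux M N A a).comp (rActAux M N C c)
      = (rActAux M N C c).comp (lActAux M N A a) :=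
    LinearMap.ext fun y => y.induction_on (by simp) (fun m n => by
      simp only [LinearMap.comp_apply, lActAux_tmul, rActAux_tmul]) (fun x y hx hy => by simp only [map_add, hx, hy])
  exact DFunLike.congr_fun h y

end Comm

section BimodHom

variable (A : Type u) [Ring A] (C : Type u) [Ring C]
variable (X : Type u) [AddCommGroup X] [Module A X] [Module Cᵐᵒᵖ X]
variable (Y : Type u) [AddCommGroup Y] [Module A Y] [Module Cᵐᵒᵖ Y]

/-- A map of `(A,C)`-bimodules: additive, left `A`-equivariant and right `C`-equivariant. -/
structure IsBimodHom (f : X → Y) : Prop where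
  map_add : ∀ x y, f (x + y) = f x + f y
  map_lsmul : ∀ (a : A) (x : X), f (a • x) = a • f x
  map_rsmul : ∀ (c : Cᵐᵒᵖ) (x : X), f (c • x) = c • f x

/-- `X` is (isomorphic to) a direct summand of `Y` as an `(A,C)`-bimodule,
i.e. a retract of `Y`. -/
def IsBimodSummand : Prop :=
  ∃ (i : X → Y) (p : Y → X), IsBimodHom A C X Y i ∧ IsBimodHom A C Y X p ∧ ∀ x, p (i x) = x

end BimodHom

section Jorder

variable (k : Type u) [Field k]

/-- A finite-dimensional `(A,B)`-bimodule over `k`, whose two induced `k`-actions agree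
with the given one. -/
structure BimodData (A B : Type u) [Ring A] [Ring B] [Algebra k A] [Algebra k B] :
    Type (u + 1) where
  X : Type u
  [acg : AddCommGroup X]
  [modk : Module k X]
  [modl : Module A X]
  [modr : Module Bᵐᵒᵖ X]
  [scc : SMulCommClass A Bᵐᵒᵖ X]
  [tl : IsScalarTower k A X]
  [tr : IsScalarTower k Bᵐᵒᵖ X]
  [fd : FiniteDimensional k X]

attribute [instance] BimodData.acg BimodData.modk BimodData.modl BimodData.modr BimodData.scc
  BimodData.tl BimodData.tr BimodData.fd

variable (A B : Type u) [Ring A] [Ring B] [Algebra k A] [Algebra k B]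

/-- `A ≥_J B`: there are finite-dimensional bimodules `M`, `N` such that the regular
`A`-`A`-bimodule `A` is a direct summand of `M ⊗_B N`. -/
def Jge : Prop :=
  ∃ (M : BimodData k A B) (N : BimodData k B A),
    IsBimodSummand A A A (BalTensor B M.X N.X)

/-- `A ≤_J B`. -/
def Jle : Prop := Jge k B A

/-- `A ∼_J B`: two-sided equivalence. -/
def Jequiv : Prop := Jge k A B ∧ Jge k B A

/-- `A >_J B`: strict two-sided inequality. -/
def Jgt : Prop := Jge k A B ∧ ¬ Jge k B A

end Jorder


section Aux

variable (B : Type u) [Ring B] (M : Type u) [AddCommGroup M] [Module Bᵐᵒᵖ M]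
  (N : Type u) [AddCommGroup N] [Module B N]

lemma BalTensor.tmul_add_left (m₁ m₂ : M) (n : N) :
    BalTensor.tmul B M N (m₁ + m₂) n
      = BalTensor.tmul B M N m₁ n + BalTensor.tmul B M N m₂ n := by
  show BalTensor.mk B M N ((m₁ + m₂) ⊗ₜ n) = _
  rw [TensorProduct.add_tmul, map_add]
  rfl

lemma BalTensor.tmul_add_right (m : M) (n₁ n₂ : N) :
    BalTensor.tmul B M N m (n₁ + n₂)
      = BalTensor.tmul B M N m n₁ + BalTensor.tmul B M N m n₂ := by
  show BalTensor.mk B M N (m ⊗ₜ (n₁ + n₂)) = _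
  rw [TensorProduct.tmul_add, map_add]
  rfl

end Aux

section Stmt3

/-- If the regular `A`-`A`-bimodule `A` is a direct summand of `M ⊗_B N`,
then every simple left `A`-module is a homomorphic image of the left `A`-module `M`, and
every simple right `A`-module is a homomorphic image of the right `A`-module `N`. -/
theorem stmt3 (k A B M N : Type u) [Field k]
    [Ring A] [Algebra k A] [FiniteDimensional k A]
    [Ring B] [Algebra k B] [FiniteDimensional k B]
    [AddCommGroup M] [Module k M] [Module A M] [Module Bᵐᵒᵖ M]
    [SMulCommClass A Bᵐᵒᵖ M] [IsScalarTower k A M] [IsScalarTower k Bᵐᵒᵖ M]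
    [FiniteDimensional k M]
    [AddCommGroup N] [Module k N] [Module B N] [Module Aᵐᵒᵖ N]
    [SMulCommClass B Aᵐᵒᵖ N] [IsScalarTower k B N] [IsScalarTower k Aᵐᵒᵖ N]
    [FiniteDimensional k N]
    (h : IsBimodSummand A A A (BalTensor B M N)) :
    (∀ (S : Type u) [AddCommGroup S] [Module A S], IsSimpleModule A S →
      ∃ f : M →ₗ[A] S, Function.Surjective f) ∧
    (∀ (S : Type u) [AddCommGroup S] [Module Aᵐᵒᵖ S], IsSimpleModule Aᵐᵒᵖ S →
      ∃ f : N →ₗ[Aᵐᵒᵖ] S, Function.Surjective f) := by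
  obtain ⟨i, p, hi, hp, hpi⟩ := h
  have hpsurj : Function.Surjective p := fun a => ⟨i a, hpi a⟩
  have hp0 : p 0 = 0 := by
    have := hp.map_lsmul 0 0
    simpa using this
  constructor
  · intro S _ _ hS
    haveI := hS
    haveI : Nontrivial S := IsSimpleModule.nontrivial A S
    obtain ⟨s₀, hs₀⟩ := exists_ne (0 : S)
    have hspan : Submodule.span A {s₀} = ⊤ := by
      rcases eq_bot_or_eq_top (Submodule.span A {s₀}) with h' | h'
      · exfalso
        have hmem := Submodule.mem_span_singleton_self (R := A) s₀
        rw [h'] at hmem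
        exact hs₀ ((Submodule.mem_bot A).mp hmem)
      · exact h'
    set g : BalTensor B M N → S := fun x => p x • s₀ with hg
    have gadd : ∀ x y, g (x + y) = g x + g y := fun x y => by
      simp only [hg, hp.map_add, add_smul]
    have glsmul : ∀ (a : A) x, g (a • x) = a • g x := fun a x => by
      simp only [hg, hp.map_lsmul]
      rw [smul_eq_mul, mul_smul]
    have g0 : g 0 = 0 := by simp [hg, hp0]
    have gsurj : Function.Surjective g := by
      intro t
      have ht : t ∈ Submodule.span A {s₀} := hspan ▸ Submodule.mem_top
      obtain ⟨a, ha⟩ := Submodule.mem_span_singleton.mp ht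
      obtain ⟨x, hx⟩ := hpsurj a
      exact ⟨x, by simp [hg, hx, ha]⟩
    have key : ∃ (m : M) (n : N), g (BalTensor.tmul B M N m n) ≠ 0 := by
      obtain ⟨x, hx⟩ : ∃ x, g x ≠ 0 := by
        obtain ⟨x, hx⟩ := gsurj s₀
        exact ⟨x, hx ▸ hs₀⟩
      obtain ⟨y, rfl⟩ := BalTensor.mk_surjective B M N x
      induction y using TensorProduct.induction_on with
      | zero => exact absurd (by rw [map_zero, g0]) hx
      | tmul m n => exact ⟨m, n, hx⟩
      | add y z ihy ihz =>
        by_cases h1 : g (BalTensor.mk B M N y) = 0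
        · refine ihz fun h2 => hx ?_
          rw [map_add, gadd, h1, h2, add_zero]
        · exact ihy h1
    obtain ⟨m₀, n₀, hmn⟩ := key
    let f : M →ₗ[A] S :=
      { toFun := fun m => g (BalTensor.tmul B M N m n₀)
        map_add' := fun m₁ m₂ => by
          beta_reduce
          rw [BalTensor.tmul_add_left, gadd]
        map_smul' := fun a m => by
          simp only [RingHom.id_apply]
          rw [← BalTensor.lsmul_tmul, glsmul] }
    refine ⟨f, ?_⟩
    rw [← LinearMap.range_eq_top]
    rcases eq_bot_or_eq_top (LinearMap.range f) with h' | h'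
    · exfalso
      apply hmn
      have hm : g (BalTensor.tmul B M N m₀ n₀) ∈ LinearMap.range f := ⟨m₀, rfl⟩
      rw [h'] at hm
      exact (Submodule.mem_bot A).mp hm
    · exact h'
  · intro S _ _ hS
    haveI := hS
    haveI : Nontrivial S := IsSimpleModule.nontrivial Aᵐᵒᵖ S
    obtain ⟨s₀, hs₀⟩ := exists_ne (0 : S)
    have hspan : Submodule.span Aᵐᵒᵖ {s₀} = ⊤ := by
      rcases eq_bot_or_eq_top (Submodule.span Aᵐᵒᵖ {s₀}) with h' | h'
      · exfalso
        have hmem := Submodule.mem_span_singleton_self (R := Aᵐᵒᵖ) s₀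
        rw [h'] at hmem
        exact hs₀ ((Submodule.mem_bot Aᵐᵒᵖ).mp hmem)
      · exact h'
    set g : BalTensor B M N → S := fun x => op (p x) • s₀ with hg
    have gadd : ∀ x y, g (x + y) = g x + g y := fun x y => by
      simp only [hg, hp.map_add, op_add, add_smul]
    have grsmul : ∀ (c : Aᵐᵒᵖ) x, g (c • x) = c • g x := fun c x => by
      simp only [hg, hp.map_rsmul]
      rw [MulOpposite.smul_eq_mul_unop, op_mul, op_unop, mul_smul]
    have g0 : g 0 = 0 := by simp [hg, hp0]
    have gsurj : Function.Surjective g := by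
      intro t
      have ht : t ∈ Submodule.span Aᵐᵒᵖ {s₀} := hspan ▸ Submodule.mem_top
      obtain ⟨c, hc⟩ := Submodule.mem_span_singleton.mp ht
      obtain ⟨x, hx⟩ := hpsurj c.unop
      exact ⟨x, by simp [hg, hx, hc]⟩
    have key : ∃ (m : M) (n : N), g (BalTensor.tmul B M N m n) ≠ 0 := by
      obtain ⟨x, hx⟩ : ∃ x, g x ≠ 0 := by
        obtain ⟨x, hx⟩ := gsurj s₀
        exact ⟨x, hx ▸ hs₀⟩
      obtain ⟨y, rfl⟩ := BalTensor.mk_surjective B M N x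
      induction y using TensorProduct.induction_on with
      | zero => exact absurd (by rw [map_zero, g0]) hx
      | tmul m n => exact ⟨m, n, hx⟩
      | add y z ihy ihz =>
        by_cases h1 : g (BalTensor.mk B M N y) = 0
        · refine ihz fun h2 => hx ?_
          rw [map_add, gadd, h1, h2, add_zero]
        · exact ihy h1
    obtain ⟨m₀, n₀, hmn⟩ := key
    let f : N →ₗ[Aᵐᵒᵖ] S :=
      { toFun := fun n => g (BalTensor.tmul B M N m₀ n)
        map_add' := fun n₁ n₂ => by
          beta_reduce
          rw [BalTensor.tmul_add_right, gadd]
        map_smul' := fun c n => by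
          simp only [RingHom.id_apply]
          rw [← BalTensor.rsmul_tmul, grsmul] }
    refine ⟨f, ?_⟩
    rw [← LinearMap.range_eq_top]
    rcases eq_bot_or_eq_top (LinearMap.range f) with h' | h'
    · exfalso
      apply hmn
      have hm : g (BalTensor.tmul B M N m₀ n₀) ∈ LinearMap.range f := ⟨n₀, rfl⟩
      rw [h'] at hm
      exact (Submodule.mem_bot Aᵐᵒᵖ).mp hm
    · exact h'

end Stmt3

end

end JJ
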